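/- arXiv:1805.03003 — 2 statements merged into one kernel-verified Lean document; each statement's English description precedes it below -/
import Mathlib

section
/- The Taylor expansion of sec²(z) around z = 0 is sec²(z) = Σ_{j≥0} b_j z^{2j}, where b_j = (−1)^j (2j+1) 2^{2j+2} (2^{2j+2} − 1) B_{2j+2} / (2j+2)! and B_n denotes the n-th Bernoulli number. -/
open PowerSeries Complex

noncomputable abbrev Ee : ℂ⟦X⟧ := rescale (2*I) (exp ℂ)
noncomputable abbrev Ee' : ℂ⟦X⟧ := rescale (-(2*I)) (exp ℂ)
noncomputable abbrev Aa : ℂ⟦X⟧ := C (R := ℂ) I * X + rescale (2*I) (bernoulliPowerSeries ℂ)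

lemma hEE' : Ee * Ee' = 1 := by
  rw [exp_mul_exp_eq_exp_add, add_neg_cancel, rescale_zero]
  simp [PowerSeries.exp]

lemma hE2 : rescale 2 Ee = Ee ^ 2 := by
  rw [rescale_rescale, sq, exp_mul_exp_eq_exp_add]
  ring_nf

lemma rescaleC (a c : ℂ) : rescale a (C (R := ℂ) c) = C (R := ℂ) c := by
  ext n
  simp [coeff_rescale, PowerSeries.coeff_C]
  split <;> simp_all

lemma hL1 : Aa * (Ee - 1) = C (R := ℂ) I * X * (Ee + 1) := by
  have h := congrArg (rescale (2*I)) (bernoulliPowerSeries_mul_exp_sub_one ℂ)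
  rw [map_mul, map_sub, map_one, rescale_X, map_mul] at h
  rw [add_mul, h]
  rw [show (C (R := ℂ)) 2 = 2 from map_ofNat _ 2]; ring

lemma hL1' : rescale 2 Aa * (Ee^2 - 1) = C (R := ℂ) I * (2*X) * (Ee^2 + 1) := by
  have h := congrArg (rescale 2) hL1
  simp only [map_mul, map_sub, map_add, map_one, hE2, rescale_X, rescaleC, map_ofNat] at h
  simp only [map_add, map_mul, rescale_X, rescaleC, map_ofNat]
  linear_combination h

noncomputable def tt : ℕ → ℂ := fun n =>
  if Even n then 0
  else (-1)^(n/2) * 2^(n+1) * (2^(n+1)-1) * ((bernoulli (n+1) : ℚ) : ℂ) / (n+1).factorial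


lemma coeff_Aa (n : ℕ) : coeff (R := ℂ) n Aa =
    (if n = 1 then I else 0) + (2*I)^n * (((bernoulli n : ℚ) : ℂ) / n.factorial) := by
  simp [bernoulliPowerSeries, coeff_rescale, coeff_mk, PowerSeries.coeff_C_mul, coeff_X,
    mul_comm]

lemma hL3 : X * PowerSeries.mk tt = Aa - rescale 2 Aa := by
  ext n
  rw [map_sub, coeff_rescale, coeff_Aa]
  cases n with
  | zero => simp [tt, bernoulli_zero]
  | succ n =>
    rw [coeff_succ_X_mul, coeff_mk]
    rcases Nat.even_or_odd n with he | ho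
    · simp only [tt, if_pos he]
      rcases Nat.eq_zero_or_pos n with rfl | hn
      · norm_num [bernoulli_one]
        ring
      · have h1 : n + 1 ≠ 1 := by omega
        have hodd : Odd (n+1) := Even.add_one he
        have : bernoulli (n+1) = 0 := by
          rw [bernoulli_eq_bernoulli'_of_ne_one h1]
          exact bernoulli'_eq_zero_of_odd hodd (by omega)
        simp [this, h1, hn.ne']
    · obtain ⟨j, rfl⟩ := ho
      have h1 : 2*j+1+1 ≠ 1 := by omega
      have hne : ¬ Even (2*j+1) := by simp [Nat.even_add_one]
      simp only [tt, if_neg hne, if_neg h1]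
      have hdiv : (2*j+1)/2 = j := by omega
      rw [hdiv]
      have hI : (2*I)^(2*j+1+1) = 2^(2*j+2) * (-1)^(j+1) := by
        rw [mul_pow]
        congr 1
        rw [show 2*j+1+1 = 2*(j+1) by ring, pow_mul, I_sq]
      rw [show 2*j+1+1 = 2*j+2 from rfl, hI]
      field_simp
      ring


lemma hdE : d⁄dX ℂ Ee = C (R := ℂ) (2*I) * Ee := by
  ext n
  rw [coeff_derivative, PowerSeries.coeff_C_mul, coeff_rescale, coeff_rescale, coeff_exp, coeff_exp,
    eq_ratCast (algebraMap ℚ ℂ), eq_ratCast (algebraMap ℚ ℂ)]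
  have h1 : ((n+1).factorial : ℂ) = (n+1) * n.factorial := by exact_mod_cast Nat.factorial_succ n
  push_cast
  rw [h1]
  have h2 : ((n:ℂ)+1) ≠ 0 := by exact_mod_cast n.succ_ne_zero
  have h3 : ((n.factorial :ℂ)) ≠ 0 := by exact_mod_cast Nat.cast_ne_zero.2 n.factorial_ne_zero
  field_simp
  ring

noncomputable def bb : ℕ → ℚ := fun j =>
  (-1 : ℚ)^j * (2 * j + 1) * 2^(2 * j + 2) * (2^(2 * j + 2) - 1) *
            bernoulli (2 * j + 2) / (Nat.factorial (2 * j + 2))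

noncomputable def gg : ℕ → ℂ := fun n => if Even n then ((bb (n/2) : ℚ) : ℂ) else 0

lemma hL4 : PowerSeries.mk tt * (Ee^2 - 1) = -(C (R := ℂ) I) * (Ee - 1)^2 := by
  apply mul_left_cancel₀ (X_ne_zero : (X:ℂ⟦X⟧) ≠ 0)
  calc X * (PowerSeries.mk tt * (Ee^2-1)) = (X * PowerSeries.mk tt) * (Ee^2-1) := by ring
  _ = (Aa - rescale 2 Aa) * (Ee^2-1) := by rw [hL3]
  _ = Aa*(Ee-1)*(Ee+1) - rescale 2 Aa * (Ee^2-1) := by ring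
  _ = C (R := ℂ) I * X * (Ee+1)*(Ee+1) - C (R := ℂ) I * (2*X) * (Ee^2+1) := by rw [hL1, hL1']
  _ = X * (-(C (R := ℂ) I) * (Ee-1)^2) := by ring

lemma hGT : d⁄dX ℂ (PowerSeries.mk tt) = PowerSeries.mk gg := by
  ext n
  rw [coeff_derivative, coeff_mk, coeff_mk]
  rcases Nat.even_or_odd n with he | ho
  · obtain ⟨j, rfl⟩ := he
    have hne : ¬ Even (j+j+1) := by simp [Nat.even_add_one, parity_simps]
    have hj2 : (j+j+1)/2 = j := by omega
    have hj3 : (j+j)/2 = j := by omega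
    have hev : Even (j+j) := ⟨j, rfl⟩
    simp only [tt, gg, bb, if_neg hne, if_pos hev, hj2, hj3]
    have : j+j+1+1 = 2*j+2 := by ring
    rw [this]
    push_cast
    field_simp
    ring
  · have hne : ¬ Even n := by simpa [Nat.not_even_iff_odd] using ho
    have heven : Even (n+1) := ho.add_one
    simp [tt, gg, if_pos heven, if_neg hne]

lemma hL5 : PowerSeries.mk gg * (Ee^2 - 1) + PowerSeries.mk tt * (C (R := ℂ) (4*I) * Ee^2)
    = C (R := ℂ) 4 * Ee * (Ee - 1) := by
  have h := congrArg (d⁄dX ℂ) hL4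
  simp only [Derivation.leibniz, Derivation.leibniz_pow, map_sub, map_neg,
    Derivation.map_one_eq_zero, hdE, hGT, PowerSeries.derivative_C, smul_eq_mul, smul_smul,
    nsmul_eq_mul, sub_zero, mul_zero, zero_mul, neg_zero, add_zero, Nat.cast_ofNat] at h
  have h4 : C (R := ℂ) (4*I) = 4 * C (R := ℂ) I := by
    rw [map_mul, show (C (R := ℂ)) 4 = 4 from map_ofNat _ 4]
  have h2 : C (R := ℂ) (2*I) = 2 * C (R := ℂ) I := by
    rw [map_mul, show (C (R := ℂ)) 2 = 2 from map_ofNat _ 2]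
  have hII : (C (R := ℂ) I) * (C (R := ℂ) I) = -1 := by
    rw [← map_mul, Complex.I_mul_I, map_neg, map_one]
  rw [show (C (R := ℂ)) 4 = 4 from map_ofNat _ 4]
  rw [h2] at h
  rw [h4]
  linear_combination h - 4 * (Ee-1) * Ee * hII

lemma hEm1_ne : (Ee - 1 : ℂ⟦X⟧) ≠ 0 := by
  intro h
  have := congrArg (coeff (R := ℂ) 1) h
  rw [map_sub, coeff_rescale, coeff_exp] at this
  simp [eq_ratCast (algebraMap ℚ ℂ)] at this

lemma hL6 : PowerSeries.mk gg * (Ee+1)^2 = C (R := ℂ) 4 * Ee := by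
  apply mul_right_cancel₀ (pow_ne_zero 2 hEm1_ne)
  have hII : (C (R := ℂ) I) * (C (R := ℂ) I) = -1 := by
    rw [← map_mul, Complex.I_mul_I, map_neg, map_one]
  calc PowerSeries.mk gg * (Ee+1)^2 * (Ee-1)^2
      = (PowerSeries.mk gg * (Ee^2-1)) * (Ee^2-1) := by ring
    _ = (C (R := ℂ) 4 * Ee * (Ee-1) - PowerSeries.mk tt * (C (R := ℂ) (4*I) * Ee^2)) * (Ee^2-1) := by
        rw [← hL5]; ring
    _ = C (R := ℂ) 4 * Ee * (Ee-1) * (Ee^2-1) - C (R := ℂ) (4*I) * Ee^2 * (PowerSeries.mk tt * (Ee^2-1)) := by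
        ring
    _ = C (R := ℂ) 4 * Ee * (Ee-1) * (Ee^2-1) - C (R := ℂ) (4*I) * Ee^2 * (-(C (R := ℂ) I) * (Ee - 1)^2) := by
        rw [hL4]
    _ = C (R := ℂ) 4 * Ee * (Ee-1)^2 := by
        have h4 : C (R := ℂ) (4*I) = C (R := ℂ) 4 * C (R := ℂ) I := by rw [map_mul]
        rw [h4]
        linear_combination (C (R := ℂ) 4 * Ee^2 * (Ee-1)^2) * hII

noncomputable def cc : ℕ → ℂ := fun n =>
  if n = 0 then 1 else if Even n then (-1)^(n/2) * 2^(n-1) / n.factorial else 0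

lemma hC4 : C (R := ℂ) 4 * PowerSeries.mk cc = Ee + Ee' + 2 := by
  ext n
  rw [PowerSeries.coeff_C_mul, coeff_mk, map_add, map_add, coeff_rescale, coeff_rescale,
    coeff_exp, eq_ratCast (algebraMap ℚ ℂ),
    show (2:ℂ⟦X⟧) = C (R := ℂ) 2 from (map_ofNat _ 2).symm, PowerSeries.coeff_C]
  rcases eq_or_ne n 0 with rfl | hn
  · norm_num [cc]
  rcases Nat.even_or_odd n with ⟨j, rfl⟩ | ho
  · have hj : j ≠ 0 := by rintro rfl; exact hn rfl
    have hj2 : (j+j)/2 = j := by omega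
    have hev : Even (j+j) := ⟨j, rfl⟩
    simp only [cc, if_neg hn, if_pos hev, hj2]
    have hI : (2*I)^(j+j) = 2^(j+j) * (-1)^j := by
      rw [mul_pow]
      congr 1
      rw [show j+j = 2*j by ring, pow_mul, I_sq]
    have hI2 : (-(2*I))^(j+j) = 2^(j+j) * (-1)^j := by
      rw [show (-(2*I))^(j+j) = (2*I)^(j+j) from Even.neg_pow ⟨j, rfl⟩ _, hI]
    rw [hI, hI2]
    have hf : ((j+j).factorial : ℂ) ≠ 0 := by exact_mod_cast (j+j).factorial_ne_zero
    have h2 : 4 * ((2:ℂ)^(j+j-1)) = 2 * 2^(j+j) := by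
      have : j+j = (j+j-1)+1 := by omega
      rw [this, Nat.add_sub_cancel, pow_succ]
      ring
    push_cast
    field_simp
    linear_combination ((-1:ℂ))^j * h2
  · have hne : ¬ Even n := Nat.not_even_iff_odd.2 ho
    have hI2 : (-(2*I))^n = -((2*I)^n) := Odd.neg_pow ho _
    simp only [cc, if_neg hn, if_neg hne, hI2]
    ring

lemma hcc0 : cc 0 = 1 := by simp [cc]

lemma hC4E_ne : (C (R := ℂ) 4 * Ee : ℂ⟦X⟧) ≠ 0 := by
  intro h
  have := congrArg (coeff (R := ℂ) 0) h
  rw [PowerSeries.coeff_C_mul, coeff_rescale, coeff_exp] at this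
  simp [eq_ratCast (algebraMap ℚ ℂ)] at this

lemma hL7 : PowerSeries.mk gg * PowerSeries.mk cc = 1 := by
  apply mul_right_cancel₀ hC4E_ne
  calc PowerSeries.mk gg * PowerSeries.mk cc * (C (R := ℂ) 4 * Ee)
      = PowerSeries.mk gg * ((C (R := ℂ) 4 * PowerSeries.mk cc) * Ee) := by ring
    _ = PowerSeries.mk gg * ((Ee + Ee' + 2) * Ee) := by rw [hC4]
    _ = PowerSeries.mk gg * (Ee^2 + 2*Ee + Ee * Ee') := by ring
    _ = PowerSeries.mk gg * (Ee+1)^2 := by rw [hEE']; ring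
    _ = C (R := ℂ) 4 * Ee := hL6
    _ = 1 * (C (R := ℂ) 4 * Ee) := (one_mul _).symm

lemma cos_ne_zero_of_norm_lt {w : ℂ} (hw : ‖w‖ < Real.pi/2) : Complex.cos w ≠ 0 := by
  intro h
  obtain ⟨k, hk⟩ := Complex.cos_eq_zero_iff.1 h
  rw [hk] at hw
  have hcast : ((2*(k:ℂ)+1) * (Real.pi:ℂ) / 2) = ((((2*k+1 : ℤ) : ℝ) * Real.pi / 2 : ℝ) : ℂ) := by
    push_cast; ring
  rw [hcast, Complex.norm_real, Real.norm_eq_abs, abs_div, abs_mul] at hw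
  have h1 : (1:ℝ) ≤ |((2*k+1 : ℤ) : ℝ)| := by
    rw [← Int.cast_abs]
    exact_mod_cast Int.one_le_abs (by omega)
  have hpi : (0:ℝ) < Real.pi := Real.pi_pos
  rw [abs_of_pos hpi] at hw
  have : |(2:ℝ)| = 2 := by norm_num
  rw [this] at hw
  nlinarith

lemma hcos2 (w : ℂ) : HasSum (fun n => cc n * w^n) (Complex.cos w^2) := by
  have h1 := Complex.hasSum_cos (2*w)
  have h2 := h1.div_const 2
  have h3 : HasSum (fun m : ℕ => if m = 0 then (1/2 : ℂ) else 0) (1/2) := hasSum_ite_eq 0 (1/2)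
  have h4 := h3.add h2
  rw [← Complex.cos_sq] at h4
  have h5 : (fun m : ℕ => (if m = 0 then (1/2:ℂ) else 0) + (-1)^m * (2*w)^(2*m) / ((2*m).factorial) / 2)
      = fun m : ℕ => cc (2*m) * w^(2*m) := by
    funext m
    rcases eq_or_ne m 0 with rfl | hm
    · simp [cc]
      norm_num
    · have hne : 2*m ≠ 0 := by omega
      have hev : Even (2*m) := ⟨m, by ring⟩
      have hdiv : (2*m)/2 = m := by omega
      simp only [cc, if_neg hm, if_neg hne, if_pos hev, hdiv]
      have hf : (((2*m).factorial : ℂ)) ≠ 0 := by exact_mod_cast (2*m).factorial_ne_zero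
      have hp : (2*w)^(2*m) = 2^(2*m) * w^(2*m) := mul_pow 2 w (2*m)
      rw [hp]
      have h2 : (2:ℂ)^(2*m) = 2 * 2^(2*m-1) := by
        rw [show 2*m = (2*m-1)+1 by omega, Nat.add_sub_cancel, pow_succ]
        ring
      field_simp
      rw [h2]
      ring
  rw [h5] at h4
  have hinj : Function.Injective (fun m : ℕ => 2*m) := fun a b h =>
    Nat.eq_of_mul_eq_mul_left (by norm_num) h
  refine (Function.Injective.hasSum_iff hinj ?_).1 h4
  intro n hn
  have hodd : ¬ Even n := by
    intro ⟨m, hm⟩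
    exact hn ⟨m, show 2*m = n by omega⟩
  have hne : n ≠ 0 := by rintro rfl; exact hodd Even.zero
  simp [cc, if_neg hne, if_neg hodd]

lemma norm_cc_le (n : ℕ) : ‖cc n‖ ≤ 2^n / n.factorial := by
  rcases eq_or_ne n 0 with rfl | hn
  · simp [cc]
  rcases Nat.even_or_odd n with he | ho
  · simp only [cc, if_neg hn, if_pos he]
    rw [norm_div, norm_mul, norm_pow, norm_pow]
    simp only [norm_neg, norm_one, one_pow, one_mul, Complex.norm_ofNat, Complex.norm_natCast]
    gcongr
    · exact one_le_two
    · omega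
  · simp only [cc, if_neg hn, if_neg (Nat.not_even_iff_odd.2 ho)]
    simp
    positivity

lemma main (z : ℂ) (hz : ‖z‖ < Real.pi / 2) :
    HasSum (fun n => z^n • gg n) (1 / Complex.cos z ^ 2) := by
  set f : ℂ → ℂ := fun w => 1 / Complex.cos w ^ 2 with hf
  have hnn : (0:ℝ) ≤ (‖z‖ + Real.pi/2)/2 := by positivity
  set R : NNReal := ⟨(‖z‖ + Real.pi/2)/2, hnn⟩ with hRdef
  have hpi : (0:ℝ) < Real.pi := Real.pi_pos
  have hRcoe : (R:ℝ) = (‖z‖ + Real.pi/2)/2 := rfl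
  have hzR : ‖z‖ < (R:ℝ) := by rw [hRcoe]; linarith
  have hRpi : (R:ℝ) < Real.pi/2 := by rw [hRcoe]; linarith
  have hR0 : 0 < R := by
    rw [← NNReal.coe_pos, hRcoe]
    have := norm_nonneg z
    linarith
  have hd : DifferentiableOn ℂ f (Metric.closedBall 0 R) := by
    intro w hw
    have hw' : ‖w‖ ≤ (R:ℝ) := by rwa [Metric.mem_closedBall, dist_zero_right] at hw
    have hcw : Complex.cos w ^ 2 ≠ 0 :=
      pow_ne_zero 2 (cos_ne_zero_of_norm_lt (lt_of_le_of_lt hw' hRpi))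
    exact ((differentiableAt_const (1:ℂ)).div
      ((Complex.differentiable_cos w).pow 2) hcw).differentiableWithinAt
  have hp := hd.hasFPowerSeriesOnBall hR0
  set p := cauchyPowerSeries f 0 R with hpdef
  have hball : ∀ w : ℂ, ‖w‖ < (R:ℝ) → HasSum (fun n => w ^ n • p.coeff n) (f w) := by
    intro w hw
    have hmem : w ∈ EMetric.ball (0:ℂ) R := by
      show w ∈ Metric.eball (0:ℂ) R
      rw [Metric.emetric_ball_nnreal, Metric.mem_ball, dist_zero_right]; exact hw
    have h := hp.hasSum hmem
    rw [zero_add] at h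
    simpa only [FormalMultilinearSeries.apply_eq_pow_smul_coeff] using h
  have hsnorm : ∀ w : ℂ, ‖w‖ < (R:ℝ) → Summable (fun n => ‖p.coeff n * w ^ n‖) := by
    intro w hw
    have hrad : (‖w‖₊ : ENNReal) < p.radius := by
      refine lt_of_lt_of_le ?_ hp.r_le
      exact_mod_cast hw
    have hs := p.summable_norm_mul_pow hrad
    refine Summable.of_nonneg_of_le (fun n => norm_nonneg _) (fun n => ?_) hs
    rw [norm_mul, norm_pow]
    have h1 : ‖p.coeff n‖ ≤ ‖p n‖ := by
      rw [FormalMultilinearSeries.coeff]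
      have h2 := (p n).le_opNorm 1
      simpa using h2
    have h3 : (‖w‖₊ : ℝ) = ‖w‖ := rfl
    rw [h3]
    gcongr
  have hprod : ∀ w : ℂ, ‖w‖ < (R:ℝ) →
      HasSum (fun n => w ^ n • (∑ kl ∈ Finset.HasAntidiagonal.antidiagonal n, p.coeff kl.1 * cc kl.2)) 1 := by
    intro w hw
    have ha : Summable (fun n => ‖p.coeff n * w ^ n‖) := hsnorm w hw
    have hb : Summable (fun n => ‖cc n * w ^ n‖) := by
      refine Summable.of_nonneg_of_le (fun n => norm_nonneg _)
        (fun n => ?_) (Real.summable_pow_div_factorial (2*‖w‖))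
      rw [norm_mul, norm_pow, mul_pow]
      calc ‖cc n‖ * ‖w‖^n ≤ (2^n / n.factorial) * ‖w‖^n := by
            gcongr
            exact norm_cc_le n
        _ = 2^n * ‖w‖^n / n.factorial := by ring
    have hasum : HasSum (fun n => p.coeff n * w^n) (f w) := by
      have h := hball w hw
      simpa only [smul_eq_mul, mul_comm] using h
    have hbsum : HasSum (fun n => cc n * w^n) (Complex.cos w ^ 2) := hcos2 w
    have hcw : Complex.cos w ≠ 0 := cos_ne_zero_of_norm_lt (lt_trans hw hRpi)
    have hmul : (∑' n, p.coeff n * w^n) * (∑' n, cc n * w^n)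
        = ∑' n, ∑ kl ∈ Finset.HasAntidiagonal.antidiagonal n, (p.coeff kl.1 * w^kl.1) * (cc kl.2 * w^kl.2) :=
      tsum_mul_tsum_eq_tsum_sum_antidiagonal_of_summable_norm ha hb
    rw [hasum.tsum_eq, hbsum.tsum_eq] at hmul
    have hone : f w * Complex.cos w ^ 2 = 1 := by
      simp only [hf]
      field_simp
    have hsummable : Summable (fun n => ∑ kl ∈ Finset.HasAntidiagonal.antidiagonal n,
        (p.coeff kl.1 * w^kl.1) * (cc kl.2 * w^kl.2)) :=
      (summable_norm_sum_mul_antidiagonal_of_summable_norm ha hb).of_norm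
    have hhs := hsummable.hasSum
    rw [← hmul, hone] at hhs
    have heq : (fun n => w ^ n • (∑ kl ∈ Finset.HasAntidiagonal.antidiagonal n, p.coeff kl.1 * cc kl.2))
        = fun n => ∑ kl ∈ Finset.HasAntidiagonal.antidiagonal n, (p.coeff kl.1 * w^kl.1) * (cc kl.2 * w^kl.2) := by
      funext n
      rw [smul_eq_mul, Finset.mul_sum]
      refine Finset.sum_congr rfl (fun kl hkl => ?_)
      have hkl' := Finset.HasAntidiagonal.mem_antidiagonal.1 hkl
      rw [← hkl', pow_add]; ring
    rw [heq]
    exact hhs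
  have he : ∀ n, (∑ kl ∈ Finset.HasAntidiagonal.antidiagonal n, p.coeff kl.1 * cc kl.2)
      = if n = 0 then 1 else 0 := by
    set e : ℕ → ℂ := fun n => ∑ kl ∈ Finset.HasAntidiagonal.antidiagonal n, p.coeff kl.1 * cc kl.2 with hedef
    set q := FormalMultilinearSeries.ofScalars ℂ e with hqdef
    have hqcoeff : ∀ n, q.coeff n = e n := by
      intro n
      rw [FormalMultilinearSeries.coeff]
      have h := FormalMultilinearSeries.ofScalars_apply_eq e (1:ℂ) n
      rw [show ((1 : Fin n → ℂ)) = (fun _ => (1:ℂ)) from rfl]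
      rw [hqdef, h]
      simp
    have hq : HasFPowerSeriesAt (fun _ : ℂ => (1:ℂ)) q 0 := by
      rw [hasFPowerSeriesAt_iff]
      have hmem : Metric.ball (0:ℂ) R ∈ nhds (0:ℂ) := Metric.ball_mem_nhds 0 (by exact_mod_cast hR0)
      filter_upwards [hmem] with w hw
      rw [Metric.mem_ball, dist_zero_right] at hw
      simp only [hqcoeff]
      exact hprod w hw
    have heqq := hq.eq_formalMultilinearSeries hasFPowerSeriesAt_const
    intro n
    have key : e n = if n = 0 then 1 else 0 := by
      rw [← (hqcoeff n), heqq]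
      rcases eq_or_ne n 0 with rfl | hn
      · simp [FormalMultilinearSeries.coeff, constFormalMultilinearSeries]
      · simp [FormalMultilinearSeries.coeff, constFormalMultilinearSeries_apply_of_nonzero hn, hn]
    exact key
  have hpg : ∀ n, p.coeff n = gg n := by
    have h1 : PowerSeries.mk (fun n => p.coeff n) * PowerSeries.mk cc = 1 := by
      ext n
      rw [PowerSeries.coeff_mul]
      simp only [coeff_mk]
      rw [he n, PowerSeries.coeff_one]
    have h2 : PowerSeries.mk (fun n => p.coeff n) = PowerSeries.mk gg := by
      calc PowerSeries.mk (fun n => p.coeff n)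
          = PowerSeries.mk (fun n => p.coeff n) * (PowerSeries.mk gg * PowerSeries.mk cc) := by
            rw [hL7, mul_one]
        _ = PowerSeries.mk gg * (PowerSeries.mk (fun n => p.coeff n) * PowerSeries.mk cc) := by
            ring
        _ = PowerSeries.mk gg := by rw [h1, mul_one]
    intro n
    have h3 := congrArg (coeff (R := ℂ) n) h2
    simpa only [coeff_mk] using h3
  have hfinal := hball z hzR
  simp only [hpg] at hfinal
  exact hfinal

theorem stmt_5 (z : ℂ) (hz : ‖z‖ < Real.pi / 2) :
    HasSum (fun j : ℕ =>
        (((-1 : ℚ)^j * (2 * j + 1) * 2^(2 * j + 2) * (2^(2 * j + 2) - 1) *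
            bernoulli (2 * j + 2) / (Nat.factorial (2 * j + 2)) : ℚ) : ℂ) * z^(2 * j))
      (1 / Complex.cos z ^ 2) := by
  have h := main z hz
  have hinj : Function.Injective (fun j : ℕ => 2*j) := fun a b h' =>
    Nat.eq_of_mul_eq_mul_left (by norm_num) h'
  have hvan : ∀ n, n ∉ Set.range (fun j : ℕ => 2*j) → z^n • gg n = 0 := by
    intro n hn
    have hodd : ¬ Even n := by
      intro ⟨m, hm⟩
      exact hn ⟨m, show 2*m = n by omega⟩
    simp [gg, hodd]
  have h2 := (Function.Injective.hasSum_iff hinj hvan).2 h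
  have heq : ((fun n => z^n • gg n) ∘ (fun j : ℕ => 2*j)) = fun j : ℕ =>
      (((-1 : ℚ)^j * (2 * j + 1) * 2^(2 * j + 2) * (2^(2 * j + 2) - 1) *
            bernoulli (2 * j + 2) / (Nat.factorial (2 * j + 2)) : ℚ) : ℂ) * z^(2 * j) := by
    funext j
    have hev : Even (2*j) := ⟨j, by ring⟩
    have hdiv : (2*j)/2 = j := by omega
    simp only [Function.comp_apply, gg, if_pos hev, hdiv, smul_eq_mul, bb]
    ring
  rw [heq] at h2
  exact h2
end

section
/- The identity −2·Σ_{n=1}^∞ 1/F_n² + Σ_{n=1}^∞ (−1)^{n+1}/F_n² + 5·Σ_{n=1}^∞ (−1)^{n+1}/L_n² = 0 holds, where F_n and L_n denote the Fibonacci and Lucas numbers. -/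
lemma fib_growth : ∀ n : ℕ, 2^n ≤ 4 * (Nat.fib (n+1))^2 := by
  have key : ∀ n : ℕ, 2^n ≤ 4 * (Nat.fib (n+1))^2 ∧ 2^(n+1) ≤ 4 * (Nat.fib (n+2))^2 := by
    intro n
    induction n with
    | zero => simp [Nat.fib]
    | succ k ih =>
      refine ⟨ih.2, ?_⟩
      have h2 : Nat.fib (k+3) = Nat.fib (k+2) + Nat.fib (k+1) := by
        rw [Nat.fib_add_two]
        exact Nat.add_comm _ _
      have h3 : Nat.fib (k+2) ≤ 2 * Nat.fib (k+1) := by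
        rw [Nat.fib_add_two]
        have := Nat.fib_le_fib_succ (n := k)
        omega
      have hfp : 0 < Nat.fib (k+1) := Nat.fib_pos.mpr (by omega)
      calc 2^(k+2) = 2 * 2^(k+1) := by ring
        _ ≤ 2 * (4 * (Nat.fib (k+2))^2) := Nat.mul_le_mul_left 2 ih.2
        _ ≤ 4 * (Nat.fib (k+3))^2 := by nlinarith [ih.2, h3, hfp]
  exact fun n => (key n).1

lemma summable_base : Summable (fun n : ℕ => 4 * ((1:ℝ)/2)^n) :=
  (summable_geometric_of_lt_one (by norm_num) (by norm_num)).mul_left 4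

lemma fib_pos_real (n : ℕ) : (0:ℝ) < (Nat.fib (n+1) : ℝ) := by
  exact_mod_cast Nat.fib_pos.mpr (Nat.succ_pos n)

lemma inv_fib_le (n : ℕ) : 1 / ((Nat.fib (n+1) : ℝ))^2 ≤ 4 * ((1:ℝ)/2)^n := by
  have h : (2:ℝ)^n ≤ 4 * ((Nat.fib (n+1)):ℝ)^2 := by exact_mod_cast fib_growth n
  have hF := fib_pos_real n
  rw [div_le_iff₀ (by positivity), show (4:ℝ) * (1/2)^n * (Nat.fib (n+1):ℝ)^2
      = (4 * (Nat.fib (n+1):ℝ)^2) / 2^n by rw [one_div, inv_pow]; ring,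
    le_div_iff₀ (by positivity)]
  linarith

lemma summable_A : Summable (fun n : ℕ => 1 / ((Nat.fib (n+1) : ℝ))^2) :=
  Summable.of_nonneg_of_le (fun n => by positivity) inv_fib_le summable_base

lemma abs_alt (n : ℕ) (x : ℝ) (hx : 0 < x) : |(-1:ℝ)^n / x| = 1 / x := by
  rw [abs_div, abs_pow, abs_neg, abs_one, one_pow, abs_of_pos hx]

lemma summable_B : Summable (fun n : ℕ => (-1:ℝ)^n / ((Nat.fib (n+1) : ℝ))^2) := by
  apply Summable.of_abs
  have h : (fun n : ℕ => |(-1:ℝ)^n / ((Nat.fib (n+1) : ℝ))^2|)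
      = fun n => 1 / ((Nat.fib (n+1) : ℝ))^2 := by
    funext n
    exact abs_alt n _ (by have := fib_pos_real n; positivity)
  rw [h]; exact summable_A

lemma lucas_pos (n : ℕ) : (0:ℝ) < ((Nat.fib n : ℝ) + Nat.fib (n+2)) := by
  have h1 : (0:ℝ) < (Nat.fib (n+2) : ℝ) := by exact_mod_cast Nat.fib_pos.mpr (by omega)
  have h2 : (0:ℝ) ≤ (Nat.fib n : ℝ) := by positivity
  linarith

lemma fib_le_lucas (n : ℕ) : (Nat.fib (n+1) : ℝ) ≤ (Nat.fib n : ℝ) + Nat.fib (n+2) := by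
  have h : (Nat.fib (n+1):ℝ) ≤ (Nat.fib (n+2):ℝ) := by
    exact_mod_cast Nat.fib_le_fib_succ
  have h0 : (0:ℝ) ≤ (Nat.fib n : ℝ) := by positivity
  linarith

lemma summable_C : Summable (fun n : ℕ => (-1:ℝ)^n / ((Nat.fib n + Nat.fib (n+2) : ℝ))^2) := by
  apply Summable.of_abs
  apply Summable.of_nonneg_of_le (fun n => abs_nonneg _) _ summable_A
  intro n
  have hl := lucas_pos n
  have hf := fib_pos_real n
  have hle := fib_le_lucas n
  rw [abs_alt n _ (by positivity)]
  apply one_div_le_one_div_of_le (by positivity)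
  nlinarith

lemma summable_D : Summable (fun n : ℕ => 4 / ((Nat.fib (2*n+2) : ℝ))^2) := by
  apply Summable.of_nonneg_of_le (fun n => by positivity) _ (summable_A.mul_left 4)
  intro n
  rw [show (4:ℝ) * (1 / (Nat.fib (n+1):ℝ)^2) = 4 / (Nat.fib (n+1):ℝ)^2 by ring]
  have h1 := fib_pos_real n
  have h2 : (Nat.fib (n+1):ℝ) ≤ (Nat.fib (2*n+2):ℝ) := by
    exact_mod_cast Nat.fib_mono (show n+1 ≤ 2*n+2 by omega)
  apply div_le_div_of_nonneg_left (by norm_num) (by positivity)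
  nlinarith

lemma summable_E : Summable (fun n : ℕ => (2 - 2*(-1:ℝ)^n) / ((Nat.fib (n+1) : ℝ))^2) := by
  apply Summable.of_nonneg_of_le _ _ (summable_A.mul_left 4)
  · intro n
    have hf := fib_pos_real n
    rcases neg_one_pow_eq_or ℝ n with h | h <;> rw [h] <;> positivity
  · intro n
    have hf := fib_pos_real n
    rcases neg_one_pow_eq_or ℝ n with h | h <;> (rw [h, mul_one_div]; norm_num) <;> positivity

lemma cassini : ∀ n : ℕ, ((Nat.fib (n+1):ℝ))^2 - Nat.fib n * Nat.fib (n+1) - ((Nat.fib n:ℝ))^2 = (-1)^n := by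
  intro n
  induction n with
  | zero => simp
  | succ k ih =>
    have h : (Nat.fib (k+2):ℝ) = Nat.fib (k+1) + Nat.fib k := by
      rw [Nat.fib_add_two]; push_cast; ring
    rw [h, pow_succ]
    linear_combination (-1 : ℝ) * ih

lemma lucas_sq (n : ℕ) : ((Nat.fib n + Nat.fib (n+2) : ℝ))^2 = 5 * ((Nat.fib (n+1):ℝ))^2 - 4*(-1)^n := by
  have h : (Nat.fib (n+2):ℝ) = Nat.fib (n+1) + Nat.fib n := by
    rw [Nat.fib_add_two]; push_cast; ring
  rw [h]
  linear_combination (-4 : ℝ) * cassini n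

lemma fib_double (n : ℕ) : (Nat.fib (2*n+2) : ℝ) = (Nat.fib (n+1) : ℝ) * ((Nat.fib n : ℝ) + Nat.fib (n+2)) := by
  have h := Nat.fib_add n (n+1)
  rw [show n + (n+1) + 1 = 2*n+2 by omega] at h
  rw [h]; push_cast; ring

lemma alg_core (F L s : ℝ) (hF : 0 < F) (hL : 0 < L)
    (hs : s^2 = 1) (hsq : L^2 = 5*F^2 - 4*s) :
    -2 * (1 / F^2) + s / F^2 + 5 * (s / L^2) = 4 / (F*L)^2 - (2 - 2*s) / F^2 := by
  have hF' : F ≠ 0 := ne_of_gt hF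
  have hL' : L ≠ 0 := ne_of_gt hL
  have h2 : F^2*L^2 ≠ 0 := by positivity
  have key : (-2 * (1/F^2) + s/F^2 + 5*(s/L^2)) * (F^2*L^2)
      = (4/(F*L)^2 - (2-2*s)/F^2) * (F^2*L^2) := by
    field_simp
    linear_combination (-s)*hsq + 4*hs
  exact mul_right_cancel₀ h2 key

lemma key_identity (n : ℕ) :
    -2 * (1 / ((Nat.fib (n+1) : ℝ))^2) + (-1:ℝ)^n / ((Nat.fib (n+1) : ℝ))^2 +
      5 * ((-1:ℝ)^n / ((Nat.fib n + Nat.fib (n+2) : ℝ))^2) =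
    4 / ((Nat.fib (2*n+2) : ℝ))^2 - (2 - 2*(-1:ℝ)^n) / ((Nat.fib (n+1) : ℝ))^2 := by
  have hs : ((-1:ℝ)^n)^2 = 1 := by
    rw [← pow_mul, mul_comm, pow_mul]; norm_num
  rw [fib_double n]
  exact alg_core _ _ _ (fib_pos_real n) (lucas_pos n) hs (lucas_sq n)

theorem stmt_16 :
    -2 * ∑' n : ℕ, 1 / ((Nat.fib (n + 1) : ℝ))^2 +
      ∑' n : ℕ, (-1 : ℝ)^n / ((Nat.fib (n + 1) : ℝ))^2 +
      5 * ∑' n : ℕ, (-1 : ℝ)^n / ((Nat.fib n + Nat.fib (n + 2) : ℝ))^2 = 0 := by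
  rw [← tsum_mul_left (a := (-2:ℝ)), ← tsum_mul_left (a := (5:ℝ))]
  rw [← Summable.tsum_add (summable_A.mul_left _) summable_B,
      ← Summable.tsum_add ((summable_A.mul_left _).add summable_B) (summable_C.mul_left _)]
  have step : ∀ n : ℕ,
      -2 * (1 / ((Nat.fib (n+1) : ℝ))^2) + (-1:ℝ)^n / ((Nat.fib (n+1) : ℝ))^2 +
        5 * ((-1:ℝ)^n / ((Nat.fib n + Nat.fib (n+2) : ℝ))^2) =
      4 / ((Nat.fib (2*n+2) : ℝ))^2 - (2 - 2*(-1:ℝ)^n) / ((Nat.fib (n+1) : ℝ))^2 := key_identity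
  rw [tsum_congr step, Summable.tsum_sub summable_D summable_E]
  have hED : (∑' n : ℕ, (2 - 2*(-1:ℝ)^n) / ((Nat.fib (n+1) : ℝ))^2) =
      ∑' n : ℕ, 4 / ((Nat.fib (2*n+2) : ℝ))^2 := by
    have hinj : Function.Injective (fun k : ℕ => 2*k+1) := by
      intro a b h
      simp only at h
      omega
    have hsupp : Function.support (fun n : ℕ => (2 - 2*(-1:ℝ)^n) / ((Nat.fib (n+1) : ℝ))^2)
        ⊆ Set.range (fun k : ℕ => 2*k+1) := by
      intro x hx
      rcases Nat.even_or_odd x with he | ho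
      · exfalso
        apply hx
        simp only [he.neg_one_pow]
        norm_num
      · obtain ⟨k, hk⟩ := ho
        exact ⟨k, hk.symm⟩
    have heq := hinj.tsum_eq (f := fun n : ℕ => (2 - 2*(-1:ℝ)^n) / ((Nat.fib (n+1) : ℝ))^2) hsupp
    rw [← heq]
    apply tsum_congr
    intro k
    have hodd : ((-1:ℝ))^(2*k+1) = -1 := by
      simp [pow_succ, pow_mul]
    simp only [hodd]
    norm_num
  rw [hED]
  ring
end
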